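/- The frequency map Ω₀(p₁) := ∂_{p₁}h(p₁,P₂(p₁)) is C¹ on Ω and for every p₁ ∈ Ω its derivative equals the Schur complement H₁₁ − H₁₂H₂₂⁻¹H₂₁ of the Hessian of h at (p₁,P₂(p₁)); in particular dΩ₀(p₁) is a symmetric positive definite m×m matrix for every p₁ ∈ Ω (the frequency map has positive torsion). -/

import Mathlib

noncomputable section
open Matrix

/-- The canonical basis of ℝᵐ×ℝʳ indexed by `Fin m ⊕ Fin r`. -/
def pbasis (m r : ℕ) : Fin m ⊕ Fin r → (Fin m → ℝ) × (Fin r → ℝ)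
  | .inl i => (Pi.single i 1, 0)
  | .inr j => (0, Pi.single j 1)

/-- The Hessian of `h : ℝᵐ×ℝʳ → ℝ` at `p`, as a matrix in the canonical basis. -/
def hessMatrix (m r : ℕ) (h : (Fin m → ℝ) × (Fin r → ℝ) → ℝ)
    (p : (Fin m → ℝ) × (Fin r → ℝ)) : Matrix (Fin m ⊕ Fin r) (Fin m ⊕ Fin r) ℝ :=
  Matrix.of fun a b => fderiv ℝ (fderiv ℝ h) p (pbasis m r a) (pbasis m r b)

lemma pbasis_expand (m r : ℕ) (v : Fin m → ℝ) (w : Fin r → ℝ) :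
    (v, w) = ∑ a : Fin m ⊕ Fin r, Sum.elim v w a • pbasis m r a := by
  rw [Fintype.sum_sum_type]
  simp only [Sum.elim_inl, Sum.elim_inr, pbasis, Prod.smul_mk, smul_zero]
  ext x
  · simp [Prod.fst_sum, Prod.snd_sum, Finset.sum_apply, Pi.single_apply]
  · simp [Prod.fst_sum, Prod.snd_sum, Finset.sum_apply, Pi.single_apply]

lemma clm_expand (m r : ℕ)
    (Φ : ((Fin m → ℝ) × (Fin r → ℝ)) →L[ℝ] (((Fin m → ℝ) × (Fin r → ℝ)) →L[ℝ] ℝ))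
    (v : Fin m → ℝ) (w : Fin r → ℝ) (e : (Fin m → ℝ) × (Fin r → ℝ)) :
    Φ (v, w) e = ∑ a : Fin m ⊕ Fin r, Sum.elim v w a * Φ (pbasis m r a) e := by
  rw [pbasis_expand m r v w]
  simp [ContinuousLinearMap.sum_apply]

lemma posdef_toBlocks₂₂ {m r : ℕ} {H : Matrix (Fin m ⊕ Fin r) (Fin m ⊕ Fin r) ℝ}
    (hH : H.PosDef) : H.toBlocks₂₂.PosDef := by
  refine Matrix.PosDef.of_dotProduct_mulVec_pos ?_ ?_
  · ext j k
    simpa [Matrix.toBlocks₂₂] using hH.1.apply (Sum.inr j) (Sum.inr k)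
  · intro x hx
    have hz : (Sum.elim (0 : Fin m → ℝ) x) ≠ 0 := by
      intro hc
      apply hx
      ext k
      exact congrFun hc (Sum.inr k)
    have := hH.dotProduct_mulVec_pos hz
    convert this using 1
    simp only [dotProduct, Matrix.mulVec, Fintype.sum_sum_type, Sum.elim_inl, Sum.elim_inr,
      star_trivial, Matrix.toBlocks₂₂]
    simp [dotProduct, mul_comm]

lemma H21_eq {m r : ℕ} {H : Matrix (Fin m ⊕ Fin r) (Fin m ⊕ Fin r) ℝ}
    (hH : H.IsHermitian) : H.toBlocks₂₁ = H.toBlocks₁₂ᴴ := by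
  ext j l
  simpa [Matrix.toBlocks₂₁, Matrix.toBlocks₁₂] using (hH.apply (Sum.inr j) (Sum.inl l)).symm

lemma schur_posdef {m r : ℕ} {H : Matrix (Fin m ⊕ Fin r) (Fin m ⊕ Fin r) ℝ}
    (hH : H.PosDef) :
    (H.toBlocks₁₁ - H.toBlocks₁₂ * H.toBlocks₂₂⁻¹ * H.toBlocks₂₁).PosDef := by
  have h22 : H.toBlocks₂₂.PosDef := posdef_toBlocks₂₂ hH
  have : Invertible H.toBlocks₂₂ := h22.isUnit.invertible
  have h21 : H.toBlocks₂₁ = H.toBlocks₁₂ᴴ := H21_eq hH.1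
  have hfb : H = Matrix.fromBlocks H.toBlocks₁₁ H.toBlocks₁₂ H.toBlocks₁₂ᴴ H.toBlocks₂₂ := by
    rw [← h21, Matrix.fromBlocks_toBlocks]
  refine Matrix.PosDef.of_dotProduct_mulVec_pos ?_ ?_
  · rw [h21]
    exact (Matrix.IsHermitian.fromBlocks₂₂ _ _ h22.1).mp (hfb ▸ hH.1)
  · intro x hx
    have key := Matrix.schur_complement_eq₂₂ (α := ℝ) H.toBlocks₁₁ H.toBlocks₁₂
      (D := H.toBlocks₂₂) x (-((H.toBlocks₂₂⁻¹ * H.toBlocks₁₂ᴴ) *ᵥ x)) h22.1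
    rw [add_neg_cancel] at key
    simp only [star_zero, Matrix.zero_vecMul, zero_dotProduct, zero_add] at key
    have hz : (Sum.elim x (-((H.toBlocks₂₂⁻¹ * H.toBlocks₁₂ᴴ) *ᵥ x))) ≠ 0 := by
      intro hc; apply hx; ext i; exact congrFun hc (Sum.inl i)
    have hpos := hH.dotProduct_mulVec_pos hz
    rw [h21, Matrix.dotProduct_mulVec, ← key, ← hfb]
    rwa [Matrix.dotProduct_mulVec] at hpos

/-- the frequency map `Ω₀(p₁) = ∂_{p₁}h(p₁,P₂(p₁))` is C¹ on `Ω`, its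
derivative is the Schur complement `H₁₁ − H₁₂H₂₂⁻¹H₂₁` of the Hessian of `h` at
`(p₁,P₂(p₁))`, and this derivative is a symmetric positive definite matrix (positive
torsion). -/
theorem frequency_map_positive_torsion
    (m r : ℕ) (h : (Fin m → ℝ) × (Fin r → ℝ) → ℝ) (hh : ContDiff ℝ 2 h)
    (hhess : ∀ p : (Fin m → ℝ) × (Fin r → ℝ), (hessMatrix m r h p).PosDef)
    (Ω : Set (Fin m → ℝ)) (hΩ : IsOpen Ω)
    (P₂ : (Fin m → ℝ) → (Fin r → ℝ)) (hP₂ : ContDiffOn ℝ 1 P₂ Ω)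
    (hP₂crit : ∀ p₁ ∈ Ω, ∀ j : Fin r, fderiv ℝ h (p₁, P₂ p₁) (0, Pi.single j 1) = 0) :
    let Ω₀ : (Fin m → ℝ) → (Fin m → ℝ) := fun p₁ =>
      fun i => fderiv ℝ h (p₁, P₂ p₁) (Pi.single i 1, 0)
    let Schur : (Fin m → ℝ) → Matrix (Fin m) (Fin m) ℝ := fun p₁ =>
      (hessMatrix m r h (p₁, P₂ p₁)).toBlocks₁₁ -
        (hessMatrix m r h (p₁, P₂ p₁)).toBlocks₁₂ *
          ((hessMatrix m r h (p₁, P₂ p₁)).toBlocks₂₂)⁻¹ *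
            (hessMatrix m r h (p₁, P₂ p₁)).toBlocks₂₁
    ContDiffOn ℝ 1 Ω₀ Ω ∧
    ∀ p₁ ∈ Ω,
      HasFDerivAt Ω₀ ((Schur p₁).mulVecLin.toContinuousLinearMap) p₁ ∧
      (Schur p₁).IsSymm ∧ (Schur p₁).PosDef := by
  classical
  intro Ω₀ Schur
  have hfd : ContDiff ℝ 1 (fderiv ℝ h) := hh.fderiv_right (by norm_num)
  constructor
  · -- C¹ regularity
    have hγc : ContDiffOn ℝ 1 (fun q => (q, P₂ q)) Ω := contDiffOn_id.prodMk hP₂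
    have hgc : ContDiffOn ℝ 1 (fun q => fderiv ℝ h (q, P₂ q)) Ω := hfd.comp_contDiffOn hγc
    apply contDiffOn_pi.2
    intro i
    exact (ContinuousLinearMap.apply ℝ ℝ ((Pi.single i 1, 0) :
      (Fin m → ℝ) × (Fin r → ℝ))).contDiff.comp_contDiffOn hgc
  intro p₁ hp₁
  set p : (Fin m → ℝ) × (Fin r → ℝ) := (p₁, P₂ p₁) with hp
  set H : Matrix (Fin m ⊕ Fin r) (Fin m ⊕ Fin r) ℝ := hessMatrix m r h p with hH
  have hHpd : H.PosDef := hhess p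
  have hHsym : ∀ a b, H a b = H b a := fun a b =>
    (hHpd.1.apply a b).symm.trans (star_trivial _)
  set D : (Fin m → ℝ) →L[ℝ] (Fin r → ℝ) := fderiv ℝ P₂ p₁ with hD
  have hdP : HasFDerivAt P₂ D p₁ :=
    ((hP₂.differentiableOn one_ne_zero p₁ hp₁).differentiableAt (hΩ.mem_nhds hp₁)).hasFDerivAt
  set G : (Fin m → ℝ) →L[ℝ] ((Fin m → ℝ) × (Fin r → ℝ)) :=
    (ContinuousLinearMap.id ℝ (Fin m → ℝ)).prod D with hG
  have hγd : HasFDerivAt (fun q => (q, P₂ q)) G p₁ := (hasFDerivAt_id p₁).prodMk hdP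
  set f'' : ((Fin m → ℝ) × (Fin r → ℝ)) →L[ℝ] (((Fin m → ℝ) × (Fin r → ℝ)) →L[ℝ] ℝ) :=
    fderiv ℝ (fderiv ℝ h) p with hf''def
  have hf'' : HasFDerivAt (fderiv ℝ h) f'' p := (hfd.differentiable one_ne_zero p).hasFDerivAt
  have hg : HasFDerivAt (fun q => fderiv ℝ h (q, P₂ q)) (f''.comp G) p₁ := hf''.comp p₁ hγd
  have hEnt : ∀ a b, f'' (pbasis m r a) (pbasis m r b) = H a b := fun a b => rfl
  have hunit : IsUnit H.toBlocks₂₂.det :=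
    isUnit_iff_ne_zero.2 (posdef_toBlocks₂₂ hHpd).det_pos.ne'
  -- criticality derivative
  have hcrit : ∀ (j : Fin r) (v : Fin m → ℝ), f'' (v, D v) (0, Pi.single j 1) = 0 := by
    intro j v
    have hF : HasFDerivAt (fun q => fderiv ℝ h (q, P₂ q) ((0, Pi.single j 1) :
        (Fin m → ℝ) × (Fin r → ℝ)))
        ((ContinuousLinearMap.apply ℝ ℝ ((0, Pi.single j 1) :
          (Fin m → ℝ) × (Fin r → ℝ))).comp (f''.comp G)) p₁ := by
      exact ((ContinuousLinearMap.apply ℝ ℝ ((0, Pi.single j 1) :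
        (Fin m → ℝ) × (Fin r → ℝ))).hasFDerivAt).comp p₁ hg
    have hF0 : HasFDerivAt (fun q => fderiv ℝ h (q, P₂ q) ((0, Pi.single j 1) :
        (Fin m → ℝ) × (Fin r → ℝ))) (0 : (Fin m → ℝ) →L[ℝ] ℝ) p₁ := by
      have : (fun _ : Fin m → ℝ => (0 : ℝ)) =ᶠ[nhds p₁]
          (fun q => fderiv ℝ h (q, P₂ q) ((0, Pi.single j 1) :
            (Fin m → ℝ) × (Fin r → ℝ))) := by
        filter_upwards [hΩ.mem_nhds hp₁] with q hq
        exact (hP₂crit q hq j).symm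
      exact (hasFDerivAt_const (0:ℝ) p₁).congr_of_eventuallyEq this.symm
    have := hF.unique hF0
    have h2 := congrFun (congrArg (fun (L : (Fin m → ℝ) →L[ℝ] ℝ) => (L : (Fin m → ℝ) → ℝ)) this) v
    have h3 : f'' (G v) (0, Pi.single j 1) = 0 := by simpa using h2
    exact h3
  -- the relation determining D
  have hDv : ∀ v : Fin m → ℝ, D v = -((H.toBlocks₂₂⁻¹ * H.toBlocks₂₁) *ᵥ v) := by
    intro v
    have hrel : H.toBlocks₂₂ *ᵥ (D v) = -(H.toBlocks₂₁ *ᵥ v) := by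
      funext j
      have hc := hcrit j v
      rw [clm_expand, Fintype.sum_sum_type] at hc
      simp only [Sum.elim_inl, Sum.elim_inr, hEnt] at hc
      have h21 : ∀ l, H (Sum.inl l) (Sum.inr j) = H.toBlocks₂₁ j l := fun l => hHsym _ _
      simp only [Matrix.mulVec, dotProduct, Pi.neg_apply]
      rw [eq_comm, neg_eq_iff_add_eq_zero]
      calc ∑ l, H.toBlocks₂₁ j l * v l + ∑ k, H.toBlocks₂₂ j k * D v k
          = ∑ l, v l * H (Sum.inl l) (Sum.inr j) + ∑ k, D v k * H (Sum.inr k) (Sum.inr j) := by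
            congr 1
            · exact Finset.sum_congr rfl fun l _ => by rw [h21, mul_comm]
            · exact Finset.sum_congr rfl fun k _ => by
                rw [mul_comm]; congr 1; exact (hHsym _ _)
        _ = 0 := hc
    have := congrArg (fun y => H.toBlocks₂₂⁻¹ *ᵥ y) hrel
    simpa [Matrix.mulVec_mulVec, Matrix.nonsing_inv_mul _ hunit, Matrix.mulVec_neg] using this
  -- evaluation of the derivative
  have heval : ∀ (v : Fin m → ℝ) (i : Fin m), f'' (v, D v) (pbasis m r (Sum.inl i)) =
      ((H.toBlocks₁₁ - H.toBlocks₁₂ * H.toBlocks₂₂⁻¹ * H.toBlocks₂₁) *ᵥ v) i := by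
    intro v i
    rw [clm_expand, Fintype.sum_sum_type]
    simp only [Sum.elim_inl, Sum.elim_inr, hEnt]
    have step1 : ∑ l, v l * H (Sum.inl l) (Sum.inl i) + ∑ k, D v k * H (Sum.inr k) (Sum.inl i)
        = (H.toBlocks₁₁ *ᵥ v) i + (H.toBlocks₁₂ *ᵥ (D v)) i := by
      simp only [Matrix.mulVec, dotProduct]
      congr 1
      · exact Finset.sum_congr rfl fun l _ => by rw [mul_comm]; congr 1; exact hHsym _ _
      · exact Finset.sum_congr rfl fun k _ => by rw [mul_comm]; congr 1; exact hHsym _ _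
    rw [step1, hDv v, Matrix.mulVec_neg, Matrix.mulVec_mulVec, Matrix.sub_mulVec,
      ← Matrix.mul_assoc, Pi.sub_apply]
    simp [sub_eq_add_neg]
  -- assemble the derivative statement
  have hSchurPD : (Schur p₁).PosDef := schur_posdef hHpd
  refine ⟨?_, ?_, hSchurPD⟩
  · set L : (((Fin m → ℝ) × (Fin r → ℝ)) →L[ℝ] ℝ) →L[ℝ] (Fin m → ℝ) :=
      ContinuousLinearMap.pi (fun i => ContinuousLinearMap.apply ℝ ℝ (pbasis m r (Sum.inl i)))
      with hL
    have hFull : HasFDerivAt Ω₀ (L.comp (f''.comp G)) p₁ := by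
      exact L.hasFDerivAt.comp p₁ hg
    have heq : L.comp (f''.comp G) = (Schur p₁).mulVecLin.toContinuousLinearMap := by
      apply ContinuousLinearMap.ext
      intro v
      funext i
      have lhs : (L.comp (f''.comp G)) v i = f'' (v, D v) (pbasis m r (Sum.inl i)) := rfl
      rw [lhs, heval v i]
      simp [Schur, Matrix.mulVecLin, hH, hp, Matrix.mul_assoc, Matrix.sub_mulVec]
    rw [← heq]
    exact hFull
  · -- symmetry
    have := hSchurPD.1
    rw [Matrix.IsSymm, ← Matrix.conjTranspose_eq_transpose_of_trivial]
    exact this
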